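/- Let n ≥ 1 and L be natural numbers and let D : List Bool → List Bool → Bool. Suppose that for every relation r : Fin n → Fin n → Bool that is a partial order (reflexive, antisymmetric, transitive) there exists a label assignment ℓ : Fin n → List Bool with (ℓ u).length ≤ L for all u and D (ℓ u) (ℓ v) = (r u v) for all u, v. Then (L : ℝ) ≥ n/4 − 2. -/

import Mathlib

private def enc : List Bool → ℕ
  | [] => 1
  | b :: t => 2 * enc t + b.toNat

private lemma enc_pos : ∀ l, 1 ≤ enc l
  | [] => le_refl _
  | b :: t => by have := enc_pos t; cases b <;> simp [enc] <;> omega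

private lemma enc_lt : ∀ l : List Bool, enc l < 2 ^ (l.length + 1)
  | [] => by simp [enc]
  | b :: t => by have := enc_lt t; cases b <;> simp [enc, pow_succ] <;> omega

private lemma enc_inj : ∀ l₁ l₂ : List Bool, enc l₁ = enc l₂ → l₁ = l₂
  | [], [], _ => rfl
  | [], b :: t, he => by
      have := enc_pos t; cases b <;> simp [enc] at he <;> omega
  | b :: t, [], he => by
      have := enc_pos t; cases b <;> simp [enc] at he <;> omega
  | b₁ :: t₁, b₂ :: t₂, he => by
      have ht : enc t₁ = enc t₂ := by
        cases b₁ <;> cases b₂ <;> simp [enc] at he <;> omega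
      have hb : b₁ = b₂ := by
        cases b₁ <;> cases b₂ <;> simp [enc] at he ⊢ <;> omega
      rw [enc_inj t₁ t₂ ht, hb]

theorem labeling_lower_bound (n L : ℕ) (hn : 1 ≤ n)
    (D : List Bool → List Bool → Bool)
    (h : ∀ r : Fin n → Fin n → Bool,
      ((∀ x, r x x = true) ∧
       (∀ x y, r x y = true → r y x = true → x = y) ∧
       (∀ x y z, r x y = true → r y z = true → r x z = true)) →
      ∃ ℓ : Fin n → List Bool,
        (∀ u : Fin n, (ℓ u).length ≤ L) ∧
        (∀ u v : Fin n, D (ℓ u) (ℓ v) = r u v)) :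
    (L : ℝ) ≥ (n : ℝ) / 4 - 2 := by
  classical
  set m := n / 2 with hm
  have hmn : m ≤ n := Nat.div_le_self _ _
  -- the bipartite partial orders
  set rel : (Fin m → Fin (n - m) → Bool) → Fin n → Fin n → Bool := fun f x y =>
    decide (x = y) ||
      if hx : x.val < m then
        if hy : m ≤ y.val then f ⟨x.val, hx⟩ ⟨y.val - m, by have := y.isLt; omega⟩
        else false
      else false with hrel
  have key : ∀ f x y, rel f x y = true ↔
      x = y ∨ ∃ (hx : x.val < m) (hy : m ≤ y.val),
        f ⟨x.val, hx⟩ ⟨y.val - m, by have := y.isLt; omega⟩ = true := by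
    intro f x y
    simp only [hrel, Bool.or_eq_true, decide_eq_true_eq]
    apply or_congr Iff.rfl
    by_cases hx : x.val < m
    · by_cases hy : m ≤ y.val
      · simp [hx, hy]
      · simp [hx, hy]
    · simp [hx]
  have props : ∀ f, ((∀ x, rel f x x = true) ∧
      (∀ x y, rel f x y = true → rel f y x = true → x = y) ∧
      (∀ x y z, rel f x y = true → rel f y z = true → rel f x z = true)) := by
    intro f
    refine ⟨fun x => (key f x x).2 (Or.inl rfl), ?_, ?_⟩
    · intro x y hxy hyx
      rcases (key f x y).1 hxy with h1 | ⟨hx, hy, -⟩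
      · exact h1
      rcases (key f y x).1 hyx with h2 | ⟨hx', hy', -⟩
      · exact h2.symm
      omega
    · intro x y z hxy hyz
      rcases (key f x y).1 hxy with h1 | ⟨hx, hy, hf⟩
      · rwa [h1]
      rcases (key f y z).1 hyz with h2 | ⟨hx', hy', -⟩
      · rwa [← h2]
      omega
  -- recovering f from rel f
  have rel_spec : ∀ f (x' : Fin m) (y' : Fin (n - m)),
      rel f ⟨x'.val, by omega⟩ ⟨y'.val + m, by have := y'.isLt; omega⟩ = f x' y' := by
    intro f x' y'
    have hne : (⟨x'.val, by omega⟩ : Fin n) ≠ ⟨y'.val + m, by have := y'.isLt; omega⟩ := by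
      have := x'.isLt
      simp only [ne_eq, Fin.mk.injEq]
      omega
    simp only [hrel, hne, decide_false, Bool.false_or]
    rw [dif_pos x'.isLt, dif_pos (Nat.le_add_left m y'.val)]
    congr 1 <;> exact Fin.ext (by simp)
  -- the labeling and the encoding injection
  have hL : ∀ l : List Bool, l.length ≤ L → enc l < 2 ^ (L + 1) := fun l hl =>
    lt_of_lt_of_le (enc_lt l) (Nat.pow_le_pow_right (by norm_num) (by omega))
  let ℓ : (Fin m → Fin (n - m) → Bool) → Fin n → List Bool :=
    fun f => (h (rel f) (props f)).choose
  have hℓ : ∀ f, (∀ u, (ℓ f u).length ≤ L) ∧ ∀ u v, D (ℓ f u) (ℓ f v) = rel f u v :=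
    fun f => (h (rel f) (props f)).choose_spec
  let Φ : (Fin m → Fin (n - m) → Bool) → Fin n → Fin (2 ^ (L + 1)) :=
    fun f u => ⟨enc (ℓ f u), hL _ ((hℓ f).1 u)⟩
  have hinj : Function.Injective Φ := by
    intro f g hfg
    have hll : ∀ u, ℓ f u = ℓ g u := by
      intro u
      apply enc_inj
      have := congrFun hfg u
      exact congrArg Fin.val this
    have hrr : ∀ x y, rel f x y = rel g x y := by
      intro x y
      rw [← (hℓ f).2 x y, ← (hℓ g).2 x y, hll, hll]
    funext x' y'
    rw [← rel_spec f x' y', ← rel_spec g x' y', hrr]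
  have hcard := Fintype.card_le_of_injective Φ hinj
  simp only [Fintype.card_fun, Fintype.card_bool, Fintype.card_fin] at hcard
  rw [← pow_mul, ← pow_mul] at hcard
  have hexp : (n - m) * m ≤ (L + 1) * n :=
    (Nat.pow_le_pow_iff_right (by norm_num)).1 hcard
  -- arithmetic
  have hq : n * n ≤ 4 * ((n - m) * m) + 1 := by
    have h2 : n = 2 * m ∨ n = 2 * m + 1 := by omega
    rcases h2 with h2 | h2
    · have : n - m = m := by omega
      rw [this, h2]; nlinarith
    · have : n - m = m + 1 := by omega
      rw [this, h2]; nlinarith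
  have hfin : n * n ≤ 4 * ((L + 1) * n) + 1 := by omega
  have hcast : (n : ℝ) * n ≤ 4 * ((L + 1) * n) + 1 := by exact_mod_cast hfin
  have hn' : (1 : ℝ) ≤ n := by exact_mod_cast hn
  nlinarith [hcast, hn', mul_pos (lt_of_lt_of_le zero_lt_one hn') (lt_of_lt_of_le zero_lt_one hn')]
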